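/- arXiv:2405.06912 — 3 statements merged into one kernel-verified Lean document; each statement's English description precedes it below -/
import Mathlib

section
/- For 0 < i < n, the intersection of the generalized horn Λ^n_{{1,...,i}} with the face Δ^{[n]-{i}} of Δ^n equals the generalized horn Λ^{[n]-{i}}_{{1,...,i-1}}, as subcomplexes of Δ^n. -/
/-- A nonempty subset `S` of the vertex set spans a simplex of the generalized horn
`Λ^I_J` iff `S ⊆ I` and `S` omits some vertex `k ∈ I - J`. Subcomplexes of a simplex are
determined by the family of vertex sets of their simplices. -/
def hornMem {α : Type*} [DecidableEq α] (I J S : Finset α) : Prop :=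
  S ⊆ I ∧ ∃ k ∈ I \ J, k ∉ S

/-- For `0 < i < n`, the intersection of the generalized horn `Λ^n_{{1,…,i}}` with the
face `Δ^{[n]-{i}}` of `Δ^n` equals the generalized horn `Λ^{[n]-{i}}_{{1,…,i-1}}`, as
subcomplexes of `Δ^n` (stated as an equality of the families of vertex sets of simplices). -/
theorem horn_inter_face (n i : ℕ) (h0 : 0 < i) (hn : i < n)
    (S : Finset (Fin (n + 1))) (hS : S.Nonempty) :
    (hornMem Finset.univ
        (Finset.univ.filter fun k : Fin (n + 1) => 1 ≤ (k : ℕ) ∧ (k : ℕ) ≤ i) S ∧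
      S ⊆ Finset.univ \ {(⟨i, by omega⟩ : Fin (n + 1))}) ↔
    hornMem (Finset.univ \ {(⟨i, by omega⟩ : Fin (n + 1))})
      (Finset.univ.filter fun k : Fin (n + 1) => 1 ≤ (k : ℕ) ∧ (k : ℕ) ≤ i - 1) S := by
  simp only [hornMem, Finset.mem_sdiff, Finset.mem_filter, Finset.mem_univ, true_and,
    Finset.mem_singleton, Finset.subset_iff]
  constructor
  · rintro ⟨⟨-, k, hk, hkS⟩, hsub⟩
    refine ⟨fun a ha => hsub ha, k, ⟨?_, ?_⟩, hkS⟩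
    · intro h; apply hk; rw [h]; simp; omega
    · intro h; apply hk; omega
  · rintro ⟨hsub, k, ⟨hki, hk⟩, hkS⟩
    refine ⟨⟨fun a _ => trivial, k, ?_, hkS⟩, fun a ha => hsub ha⟩
    intro h
    apply hk
    have : (k : ℕ) ≠ i := fun he => hki (Fin.ext (by simpa using he))
    omega
end

section
/- For 0 ≤ i < n-1, the intersection of the subcomplex s(i+1,n) = Δ^{{0,...,n-1}} ∪ Δ^{{i+1,...,n}} of Δ^n with the face Δ^{{i,...,n}} equals the generalized horn Λ^{{i,...,n}}_{{i+1,...,n-1}}. -/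
/-- For `0 ≤ i < n - 1`, the intersection of the subcomplex
`s(i+1,n) = Δ^{{0,…,n-1}} ∪ Δ^{{i+1,…,n}}` of `Δ^n` with the face `Δ^{{i,…,n}}` equals the
generalized horn `Λ^{{i,…,n}}_{{i+1,…,n-1}}` (as families of vertex sets of simplices). -/
theorem s_inter_face (n i : ℕ) (hi : i < n - 1)
    (S : Finset (Fin (n + 1))) (hS : S.Nonempty) :
    ((S ⊆ Finset.univ.filter (fun v : Fin (n + 1) => (v : ℕ) < n) ∨
        S ⊆ Finset.univ.filter (fun v : Fin (n + 1) => i + 1 ≤ (v : ℕ))) ∧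
      S ⊆ Finset.univ.filter (fun v : Fin (n + 1) => i ≤ (v : ℕ))) ↔
    hornMem (Finset.univ.filter (fun v : Fin (n + 1) => i ≤ (v : ℕ)))
      (Finset.univ.filter (fun v : Fin (n + 1) => i + 1 ≤ (v : ℕ) ∧ (v : ℕ) < n)) S := by
  have hn : i + 1 < n := by omega
  unfold hornMem
  constructor
  · rintro ⟨h1 | h2, hI⟩
    · refine ⟨hI, ⟨⟨n, by omega⟩, ?_, ?_⟩⟩
      · simp; omega
      · intro h
        have := h1 h
        simp at this
    · refine ⟨hI, ⟨⟨i, by omega⟩, ?_, ?_⟩⟩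
      · simp
      · intro h
        have := h2 h
        simp at this
  · rintro ⟨hI, k, hk, hkS⟩
    simp at hk
    refine ⟨?_, hI⟩
    rcases hk with ⟨hik, hk2⟩
    have hk3 : (k : ℕ) = i ∨ (k : ℕ) = n := by
      have := k.isLt
      by_cases h : i + 1 ≤ (k : ℕ)
      · have := hk2 h; omega
      · omega
    rcases hk3 with h | h
    · -- k = i
      right
      intro v hv
      have h1 := hI hv
      simp at h1 ⊢
      rcases Nat.lt_or_ge (v : ℕ) (i + 1) with hv1 | hv1
      · exfalso
        apply hkS
        have : v = k := by
          apply Fin.ext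
          omega
        rwa [this] at hv
      · exact hv1
    · -- k = n
      left
      intro v hv
      simp
      rcases Nat.lt_or_ge (v : ℕ) n with hv1 | hv1
      · exact hv1
      · exfalso
        apply hkS
        have : v = k := by
          apply Fin.ext
          have := v.isLt
          omega
        rwa [this] at hv
end

section
/- Let Q(•) be the cosimplicial simplicial set with Q(n) = Δ^n ⋆ Δ^{n,op} ≅ Δ^{2n+1} and cosimplicial structure induced by [n] ↦ [n]⋆[n]^op. Then Q(•) is Reedy cofibrant: for each n, the n-th latching map L_n Q(•) → Q(n) is a monomorphism, and its image is the subcomplex ⋃_{i=0}^{n} Δ^{([n]-{i}) ⋆ ([n]-{i})^{op}} of Q(n). -/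
/-- The coface map `d^i : Q(n-1) → Q(n)` on vertices, where the vertices of
`Q(m) = Δ^{[m]⋆[m]^op}` are identified with `Fin (2m+2)` via `0j ↦ j`, `1j ↦ 2m+1-j`.
It sends `0j ↦ 0 δᵢ(j)` and `1j ↦ 1 δᵢ(j)`. -/
def dJoin (n i : ℕ) (v : Fin (2 * n)) : Fin (2 * n + 2) :=
  if (v : ℕ) < n then
    (if (v : ℕ) < i then ⟨(v : ℕ), by have := v.isLt; omega⟩
     else ⟨(v : ℕ) + 1, by have := v.isLt; omega⟩)
  else
    (if 2 * n - 1 - (v : ℕ) < i then ⟨2 * n + 1 - (2 * n - 1 - (v : ℕ)), by omega⟩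
     else ⟨2 * n - (2 * n - 1 - (v : ℕ)), by omega⟩)


def gInv (n i u : ℕ) : ℕ :=
  if u < i then u else if u ≤ 2 * n + 1 - i then u - 1 else u - 2

lemma dJoin_val (n i : ℕ) (v : Fin (2 * n)) :
    (dJoin n i v : ℕ) =
      if (v : ℕ) < n then (if (v : ℕ) < i then (v : ℕ) else (v : ℕ) + 1)
      else (if 2 * n - 1 - (v : ℕ) < i then 2 * n + 1 - (2 * n - 1 - (v : ℕ))
            else 2 * n - (2 * n - 1 - (v : ℕ))) := by
  unfold dJoin; split_ifs <;> rfl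

/-- The cosimplicial simplicial set `Q(•)`, `Q(n) = Δ^n ⋆ Δ^{n,op} ≅ Δ^{2n+1}`, is Reedy
cofibrant: each coface `d^i : Q(n-1) → Q(n)` is injective on simplices, and a (monotone)
simplex of `Q(n)` lies in the latching subcomplex, i.e. factors through some coface,
iff it lies in one of the faces `Δ^{([n]-{i}) ⋆ ([n]-{i})^op}`, i.e. its vertices avoid
the pair `{0i, 1i}` for some `i`; hence the latching map is a monomorphism with image
`⋃_{i=0}^{n} Δ^{([n]-{i}) ⋆ ([n]-{i})^op}`. -/
theorem Q_reedy_cofibrant (n : ℕ) (hn : 1 ≤ n) :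
    (∀ i ≤ n, Function.Injective (dJoin n i)) ∧
    ∀ (m : ℕ) (x : Fin (m + 1) → Fin (2 * n + 2)), Monotone x →
      ((∃ i ≤ n, ∃ y : Fin (m + 1) → Fin (2 * n), Monotone y ∧ x = dJoin n i ∘ y) ↔
        ∃ i ≤ n, ∀ k, (x k : ℕ) ≠ i ∧ (x k : ℕ) ≠ 2 * n + 1 - i) := by
  constructor
  · intro i hi a b hab
    have h := congrArg Fin.val hab
    rw [dJoin_val, dJoin_val] at h
    have ha := a.isLt; have hb := b.isLt
    apply Fin.ext
    split_ifs at h <;> omega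
  · intro m x hx
    constructor
    · rintro ⟨i, hi, y, hy, rfl⟩
      refine ⟨i, hi, fun k => ?_⟩
      have := (y k).isLt
      simp only [Function.comp_apply, dJoin_val]
      split_ifs <;> omega
    · rintro ⟨i, hi, h⟩
      have hb : ∀ k, gInv n i (x k) < 2 * n := by
        intro k
        have := (x k).isLt; have h1 := (h k).1; have h2 := (h k).2
        unfold gInv; split_ifs <;> omega
      refine ⟨i, hi, fun k => ⟨gInv n i (x k), hb k⟩, ?_, ?_⟩
      · intro a b hab
        have hab' : (x a : ℕ) ≤ x b := hx hab
        have h1a := (h a).1; have h2a := (h a).2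
        have h1b := (h b).1; have h2b := (h b).2
        show (⟨gInv n i (x a), hb a⟩ : Fin (2*n)) ≤ ⟨gInv n i (x b), hb b⟩
        rw [Fin.mk_le_mk]
        unfold gInv; split_ifs <;> omega
      · funext k
        apply Fin.ext
        simp only [Function.comp_apply, dJoin_val]
        have := (x k).isLt; have h1 := (h k).1; have h2 := (h k).2
        have hbk := hb k
        unfold gInv at hbk ⊢
        split_ifs at hbk ⊢ <;> omega
end
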